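/- Let V₁ and V₂ be linear subspaces of ℝˡ (with its standard inner product) with dim V₁ = dim V₂ = q. Then there exist orthonormal bases a₁,…,a_q of V₁ and b₁,…,b_q of V₂ such that ⟨aᵢ, bⱼ⟩ = 0 whenever i ≠ j. -/

import Mathlib

open scoped InnerProductSpace

set_option maxHeartbeats 1000000

/-- Let `V₁`, `V₂` be linear subspaces of `ℝˡ` with `dim V₁ = dim V₂ = q`.
Then there exist orthonormal bases `a₁,…,a_q` of `V₁` and `b₁,…,b_q` of `V₂`
such that `⟨aᵢ, bⱼ⟩ = 0` whenever `i ≠ j`. -/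
theorem stmt_0 (l q : ℕ) (V₁ V₂ : Submodule ℝ (EuclideanSpace ℝ (Fin l)))
    (h₁ : Module.finrank ℝ V₁ = q) (h₂ : Module.finrank ℝ V₂ = q) :
    ∃ a b : Fin q → EuclideanSpace ℝ (Fin l),
      (∀ i, a i ∈ V₁) ∧ (∀ i, b i ∈ V₂) ∧
      Orthonormal ℝ a ∧ Orthonormal ℝ b ∧
      Submodule.span ℝ (Set.range a) = V₁ ∧
      Submodule.span ℝ (Set.range b) = V₂ ∧
      (∀ i j : Fin q, i ≠ j → ⟪a i, b j⟫_ℝ = 0) := by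
  classical
  set T : V₁ →ₗ[ℝ] V₂ := V₂.orthogonalProjectionOnto.toLinearMap ∘ₗ V₁.subtype with hTdef
  have hS : (LinearMap.adjoint T ∘ₗ T).IsSymmetric := by
    intro x y
    show ⟪LinearMap.adjoint T (T x), y⟫_ℝ = ⟪x, LinearMap.adjoint T (T y)⟫_ℝ
    rw [LinearMap.adjoint_inner_left, LinearMap.adjoint_inner_right]
  set a' : OrthonormalBasis (Fin q) ℝ V₁ := hS.eigenvectorBasis h₁ with ha'def
  set μ : Fin q → ℝ := hS.eigenvalues h₁ with hμdef
  have hμa : ∀ i, LinearMap.adjoint T (T (a' i)) = (μ i : ℝ) • a' i := fun i =>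
    hS.apply_eigenvectorBasis h₁ i
  set c : Fin q → V₂ := fun i => T (a' i) with hcdef
  -- the c i are pairwise orthogonal
  have hc : ∀ i j : Fin q, i ≠ j → ⟪c i, c j⟫_ℝ = 0 := by
    intro i j hij
    have : ⟪c i, c j⟫_ℝ = ⟪(a' i : V₁), LinearMap.adjoint T (T (a' j))⟫_ℝ := by
      rw [LinearMap.adjoint_inner_right]
    rw [this, hμa j, real_inner_smul_right (F := V₁), a'.orthonormal.2 hij, mul_zero]
  set s : Set (Fin q) := {i | c i ≠ 0} with hsdef
  set v : Fin q → V₂ := fun i => (‖c i‖⁻¹ : ℝ) • c i with hvdef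
  have hv : Orthonormal ℝ (s.restrict v) := by
    rw [orthonormal_iff_ite]
    rintro ⟨i, hi⟩ ⟨j, hj⟩
    simp only [Set.restrict_apply, Subtype.mk.injEq]
    by_cases hij : i = j
    · subst hij
      rw [if_pos rfl]
      have hne : ‖c i‖ ≠ 0 := norm_ne_zero_iff.mpr hi
      have hval : ‖(c i : V₂)‖⁻¹ * (‖(c i : V₂)‖⁻¹ * (‖(c i : V₂)‖ * ‖(c i : V₂)‖)) = 1 := by
        field_simp
      simp only [hvdef]
      change ⟪‖c i‖⁻¹ • c i, ‖c i‖⁻¹ • c i⟫_ℝ = 1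
      rw [real_inner_smul_left (F := V₂), real_inner_smul_right (F := V₂), real_inner_self_eq_norm_mul_norm]
      exact hval
    · rw [if_neg hij]
      change ⟪‖c i‖⁻¹ • c i, ‖c j‖⁻¹ • c j⟫_ℝ = 0
      simp only [hvdef, real_inner_smul_left (F := V₂), real_inner_smul_right (F := V₂), hc i j hij, mul_zero]
  obtain ⟨b', hb'⟩ := hv.exists_orthonormalBasis_extension_of_card_eq (by simp [h₂])
  have hspan₁ : Submodule.span ℝ (Set.range ⇑a') = ⊤ := by
    rw [← a'.coe_toBasis]; exact a'.toBasis.span_eq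
  have hspan₂ : Submodule.span ℝ (Set.range ⇑b') = ⊤ := by
    rw [← b'.coe_toBasis]; exact b'.toBasis.span_eq
  refine ⟨fun i => (a' i : EuclideanSpace ℝ (Fin l)),
    fun i => (b' i : EuclideanSpace ℝ (Fin l)),
    fun i => (a' i).2, fun i => (b' i).2, ?_, ?_, ?_, ?_, ?_⟩
  · exact a'.orthonormal.comp_linearIsometry V₁.subtypeₗᵢ
  · exact b'.orthonormal.comp_linearIsometry V₂.subtypeₗᵢ
  · have h : (fun i => (a' i : EuclideanSpace ℝ (Fin l))) = V₁.subtype ∘ ⇑a' := rfl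
    rw [h, Set.range_comp, ← Submodule.map_span, hspan₁, Submodule.map_top,
      Submodule.range_subtype]
  · have h : (fun i => (b' i : EuclideanSpace ℝ (Fin l))) = V₂.subtype ∘ ⇑b' := rfl
    rw [h, Set.range_comp, ← Submodule.map_span, hspan₂, Submodule.map_top,
      Submodule.range_subtype]
  · intro i j hij
    have key : ⟪((a' i : EuclideanSpace ℝ (Fin l))), ((b' j : EuclideanSpace ℝ (Fin l)))⟫_ℝ
        = ⟪c i, b' j⟫_ℝ :=
      (V₂.inner_orthogonalProjectionOnto_eq_of_mem_right (b' j)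
        ((a' i : EuclideanSpace ℝ (Fin l)))).symm
    rw [key]
    by_cases hi : c i = 0
    · rw [hi, inner_zero_left]
    · have h0 : ⟪v i, b' j⟫_ℝ = 0 := by
        rw [← hb' i hi]; exact b'.orthonormal.2 hij
      have h1 : (‖c i‖⁻¹ : ℝ) * ⟪c i, b' j⟫_ℝ = 0 := by
        rw [← real_inner_smul_left]; exact h0
      have h2 : (‖c i‖⁻¹ : ℝ) ≠ 0 := inv_ne_zero (norm_ne_zero_iff.mpr hi)
      exact (mul_eq_zero.mp h1).resolve_left h2
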